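/- Let ρ be a fully separable state on ℂ^{d_{A_1}} ⊗ ⋯ ⊗ ℂ^{d_{A_n}}, fix a subsystem A_q, let a ∈ ℝ^m and b ∈ ℝ^n be arbitrary vectors, and for each i let {E^{A_i}_{α,k}} be an informationally complete (N_{A_i},M_{A_i})-POVM on ℂ^{d_{A_i}} with efficiency parameter x_{A_i}. Then ‖Q_{a,b}(ρ_{A_1⋯Â_q⋯A_n})‖_tr ≤ √( (|a|² + (d_{A_q}−1)(d_{A_q}² + M_{A_q}² x_{A_q})/(d_{A_q} M_{A_q}(M_{A_q}−1))) · (|b|² + ∏_{i≠q} ((d_{A_i}−1)/d_{A_i})·(d_{A_i}² + M_{A_i}² x_{A_i})/(M_{A_i}(M_{A_i}−1))) ). -/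

import Mathlib

open scoped BigOperators ComplexOrder
open Matrix

noncomputable def traceNorm {m n : Type*} [Fintype m] [Fintype n] [DecidableEq n]
    (X : Matrix m n ℂ) : ℝ :=
  ((Matrix.posSemidef_conjTranspose_mul_self X).1.eigenvectorUnitary.1 *
      diagonal (((↑) : ℝ → ℂ) ∘ (√·) ∘ (Matrix.posSemidef_conjTranspose_mul_self X).1.eigenvalues) *
      (star (Matrix.posSemidef_conjTranspose_mul_self X).1.eigenvectorUnitary :
        Matrix n n ℂ)).trace.re

def IsDensityMatrix {ι : Type*} [Fintype ι] (ρ : Matrix ι ι ℂ) : Prop :=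
  ρ.PosSemidef ∧ ρ.trace = 1

def IsNMPOVM (d N M : ℕ) (x : ℝ)
    (E : Fin N → Fin M → Matrix (Fin d) (Fin d) ℂ) : Prop :=
  (∀ α k, (E α k).PosSemidef) ∧
  (∀ α, ∑ k, E α k = 1) ∧
  (∀ α k, (E α k).trace = (((d : ℝ) / M : ℝ) : ℂ)) ∧
  (∀ α k, (E α k * E α k).trace = (x : ℂ)) ∧
  (∀ α k l, k ≠ l → (E α k * E α l).trace =
      ((((d : ℝ) - M * x) / (M * ((M : ℝ) - 1)) : ℝ) : ℂ)) ∧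
  (∀ α β k l, α ≠ β → (E α k * E β l).trace = (((d : ℝ) / M ^ 2 : ℝ) : ℂ)) ∧
  ((d : ℝ) / M ^ 2 < x ∧ x ≤ min ((d : ℝ) ^ 2 / M ^ 2) ((d : ℝ) / M))

def IsInfoComplete (d N M : ℕ) : Prop := ((M : ℝ) - 1) * N = (d : ℝ) ^ 2 - 1
/-- Tensor (Kronecker) product of a family of matrices, one per subsystem. -/
def famKron {nn : ℕ} {d : Fin nn → ℕ}
    (A : ∀ i, Matrix (Fin (d i)) (Fin (d i)) ℂ) :
    Matrix (∀ i, Fin (d i)) (∀ i, Fin (d i)) ℂ :=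
  Matrix.of fun f g => ∏ i, A i (f i) (g i)

/-- An n-partite state is fully separable if it is a finite convex combination
of tensor products of local density matrices. -/
def FullySeparable {nn : ℕ} {d : Fin nn → ℕ}
    (ρ : Matrix (∀ i, Fin (d i)) (∀ i, Fin (d i)) ℂ) : Prop :=
  ∃ (K : ℕ) (p : Fin K → ℝ)
    (ρs : Fin K → ∀ i, Matrix (Fin (d i)) (Fin (d i)) ℂ),
    (∀ j, 0 ≤ p j) ∧ (∑ j, p j = 1) ∧
    (∀ j i, IsDensityMatrix (ρs j i)) ∧
    ρ = ∑ j, (p j : ℂ) • famKron (ρs j)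
/-- Build a family from a distinguished value at index `q` and values at all
other indices. -/
def famWith {nn : ℕ} (F : Fin nn → Type*) (q : Fin nn) (xq : F q)
    (y : ∀ i, i ≠ q → F i) : ∀ i, F i :=
  fun i => if h : i = q then h ▸ xq else y i h


section AuxProofs

lemma re_dot_le {K : Type*} [Fintype K] (u w : K → ℂ) :
    (∑ t, (starRingEnd ℂ) (u t) * w t).re ≤
      Real.sqrt (∑ t, Complex.normSq (u t)) * Real.sqrt (∑ t, Complex.normSq (w t)) := by
  have h1 : (∑ t, (starRingEnd ℂ) (u t) * w t).re ≤ ∑ t, ‖u t‖ * ‖w t‖ := by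
    rw [Complex.re_sum]
    refine Finset.sum_le_sum fun t _ => ?_
    calc ((starRingEnd ℂ) (u t) * w t).re ≤ ‖(starRingEnd ℂ) (u t) * w t‖ :=
          Complex.re_le_norm _
      _ = ‖u t‖ * ‖w t‖ := by rw [norm_mul, Complex.norm_conj]
  refine h1.trans ?_
  have h2 : (∑ t, ‖u t‖ * ‖w t‖) ^ 2 ≤
      (∑ t, Complex.normSq (u t)) * (∑ t, Complex.normSq (w t)) := by
    refine Finset.sum_sq_le_sum_mul_sum_of_sq_eq_mul _ (fun t _ => Complex.normSq_nonneg _)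
      (fun t _ => Complex.normSq_nonneg _) (fun t _ => ?_)
    rw [mul_pow, Complex.sq_norm, Complex.sq_norm]
  have h3 : 0 ≤ ∑ t, ‖u t‖ * ‖w t‖ :=
    Finset.sum_nonneg fun t _ => mul_nonneg (norm_nonneg _) (norm_nonneg _)
  calc (∑ t, ‖u t‖ * ‖w t‖)
      = Real.sqrt ((∑ t, ‖u t‖ * ‖w t‖) ^ 2) := by
        rw [Real.sqrt_sq h3]
    _ ≤ Real.sqrt ((∑ t, Complex.normSq (u t)) * (∑ t, Complex.normSq (w t))) :=
        Real.sqrt_le_sqrt h2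
    _ = _ := Real.sqrt_mul (Finset.sum_nonneg fun t _ => Complex.normSq_nonneg _) _

lemma trace_conjTranspose_mul_self_re {m K : Type*} [Fintype m] [Fintype K]
    (M : Matrix m K ℂ) :
    (Matrix.trace (Mᴴ * M)).re = ∑ j, ∑ i, Complex.normSq (M i j) := by
  simp only [Matrix.trace, Matrix.diag, Matrix.mul_apply, Matrix.conjTranspose_apply]
  rw [Complex.re_sum]
  refine Finset.sum_congr rfl fun j _ => ?_
  rw [Complex.re_sum]
  refine Finset.sum_congr rfl fun i _ => ?_
  simp [Complex.normSq_apply, Complex.star_def, Complex.mul_re]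

lemma sum_sqrt_eig_le {m' n' K : Type*} [Fintype m'] [Fintype n'] [Fintype K]
    [DecidableEq n'] [DecidableEq m']
    (L : Matrix m' K ℂ) (R : Matrix n' K ℂ) (lam : n' → ℝ) (hlam0 : ∀ i, 0 ≤ lam i)
    (V : Matrix n' n' ℂ) (hVV : star V * V = 1) (hVV' : V * star V = 1)
    (hspec : (L * Rᴴ)ᴴ * (L * Rᴴ) = V * Matrix.diagonal (fun i => ((lam i : ℂ))) * star V) :
    (∑ i, Real.sqrt (lam i)) ≤
      Real.sqrt (∑ i, ∑ j, Complex.normSq (L i j)) *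
      Real.sqrt (∑ i, ∑ j, Complex.normSq (R i j)) := by
  classical
  set X : Matrix m' n' ℂ := L * Rᴴ with hXdef
  set s : n' → ℝ := fun i => Real.sqrt (lam i) with hs
  set D : Matrix n' n' ℂ := Matrix.diagonal (fun i => ((lam i : ℂ))) with hD
  have hAV : Xᴴ * (X * V) = V * D := by
    rw [← Matrix.mul_assoc, hspec, Matrix.mul_assoc, Matrix.mul_assoc, hVV, Matrix.mul_one]
  set Dinv : Matrix n' n' ℂ := Matrix.diagonal (fun i => ((s i : ℂ))⁻¹) with hDinv
  set W : Matrix m' n' ℂ := X * V * Dinv with hW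
  have hWs : Wᴴ = Dinv * (star V * Xᴴ) := by
    rw [hW, Matrix.conjTranspose_mul, Matrix.conjTranspose_mul, hDinv,
      Matrix.diagonal_conjTranspose]
    have hstar : (star fun i => ((s i : ℂ))⁻¹) = fun i => ((s i : ℂ))⁻¹ := by
      funext i; simp [Pi.star_apply, ← Complex.ofReal_inv]
    rw [hstar]
    rfl
  have hWXV : Wᴴ * (X * V) = Dinv * D := by
    rw [hWs]
    calc Dinv * (star V * Xᴴ) * (X * V)
        = Dinv * (star V * (Xᴴ * (X * V))) := by simp only [Matrix.mul_assoc]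
      _ = Dinv * (star V * (V * D)) := by rw [hAV]
      _ = Dinv * (star V * V * D) := by simp only [Matrix.mul_assoc]
      _ = Dinv * D := by rw [hVV, Matrix.one_mul]
  have hWW : Wᴴ * W = Dinv * D * Dinv := by
    rw [hW, ← Matrix.mul_assoc, hWXV]
  have hlamsq : ∀ i, ((lam i : ℂ)) = ((s i : ℂ)) * ((s i : ℂ)) := by
    intro i
    have h1 : Real.sqrt (lam i) * Real.sqrt (lam i) = lam i := Real.mul_self_sqrt (hlam0 i)
    rw [hs, ← Complex.ofReal_mul, h1]
  have hkey : ∀ i, ((s i : ℂ))⁻¹ * ((lam i : ℂ)) * ((s i : ℂ))⁻¹ * ((s i : ℂ))⁻¹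
      = ((s i : ℂ))⁻¹ := by
    intro i
    rcases eq_or_ne (s i) 0 with h0 | h0
    · simp [h0]
    · have : ((s i : ℂ)) ≠ 0 := by exact_mod_cast h0
      rw [hlamsq i]; field_simp
  have hDinvDDinv : Dinv * D * Dinv * Dinv = Dinv := by
    rw [hDinv, hD]
    simp only [Matrix.diagonal_mul_diagonal]
    exact congrArg Matrix.diagonal (funext fun i => hkey i)
  have hWe : W * (Dinv * D * Dinv) = W := by
    calc W * (Dinv * D * Dinv)
        = X * V * (Dinv * (Dinv * D * Dinv)) := by rw [hW]; simp only [Matrix.mul_assoc]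
      _ = X * V * (Dinv * D * Dinv * Dinv) := by
          congr 1
          rw [hDinv, hD]
          simp only [Matrix.diagonal_mul_diagonal]
          exact congrArg Matrix.diagonal (funext fun i => by ring)
      _ = W := by rw [hDinvDDinv, hW]
  set P : Matrix m' m' ℂ := 1 - W * Wᴴ with hPm
  have hPH : Pᴴ = P := by
    rw [hPm, Matrix.conjTranspose_sub, Matrix.conjTranspose_one, Matrix.conjTranspose_mul,
      Matrix.conjTranspose_conjTranspose]
  have hPP : P * P = P := by
    have this1 : W * Wᴴ * (W * Wᴴ) = W * Wᴴ := by
      calc W * Wᴴ * (W * Wᴴ) = W * (Wᴴ * W) * Wᴴ := by simp only [Matrix.mul_assoc]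
        _ = W * (Dinv * D * Dinv) * Wᴴ := by rw [hWW]
        _ = W * Wᴴ := by rw [hWe]
    rw [hPm, Matrix.sub_mul, Matrix.mul_sub, Matrix.mul_sub, this1]
    simp only [Matrix.one_mul, Matrix.mul_one]
    abel
  have htrP : ((L * Lᴴ) * (W * Wᴴ)).trace.re ≤ (L * Lᴴ).trace.re := by
    have h1 : (P * L) * (P * L)ᴴ = P * (L * Lᴴ) * P := by
      rw [Matrix.conjTranspose_mul, hPH]
      simp only [Matrix.mul_assoc]
    have h2 : (P * (L * Lᴴ) * P).trace = ((L * Lᴴ) * P).trace := by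
      rw [Matrix.trace_mul_cycle, ← Matrix.mul_assoc, hPP, Matrix.mul_assoc,
        Matrix.trace_mul_comm]
    have hsplit : (L * Lᴴ).trace = ((L * Lᴴ) * (W * Wᴴ)).trace + ((P * L) * (P * L)ᴴ).trace := by
      rw [h1, h2, hPm, Matrix.mul_sub, Matrix.mul_one, Matrix.trace_sub]
      ring
    have h3 : 0 ≤ ((P * L) * (P * L)ᴴ).trace.re := by
      rw [Matrix.trace_mul_comm, trace_conjTranspose_mul_self_re]
      exact Finset.sum_nonneg fun j _ => Finset.sum_nonneg fun i _ => Complex.normSq_nonneg _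
    have := congrArg Complex.re hsplit
    rw [Complex.add_re] at this
    linarith
  set G : Matrix K n' ℂ := Lᴴ * W with hG
  set H : Matrix K n' ℂ := Rᴴ * V with hH2
  have hGH : Gᴴ * H = Dinv * D := by
    rw [hG, hH2, Matrix.conjTranspose_mul, Matrix.conjTranspose_conjTranspose]
    calc Wᴴ * L * (Rᴴ * V) = Wᴴ * (L * Rᴴ * V) := by simp only [Matrix.mul_assoc]
      _ = Wᴴ * (X * V) := by rw [← hXdef]
      _ = Dinv * D := hWXV
  have hsdiag : ∀ i, s i = ((Gᴴ * H) i i).re := by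
    intro i
    rw [hGH, hDinv, hD, Matrix.diagonal_mul_diagonal]
    simp only [Matrix.diagonal_apply_eq]
    rcases eq_or_ne (s i) 0 with h0 | h0
    · have hl : lam i = 0 := by
        have := Real.sqrt_eq_zero (hlam0 i) |>.mp h0
        exact this
      simp [h0, hl]
    · have hsne : ((s i : ℂ)) ≠ 0 := by exact_mod_cast h0
      rw [hlamsq i]
      have : ((s i : ℂ))⁻¹ * (((s i : ℂ)) * ((s i : ℂ))) = ((s i : ℂ)) := by field_simp
      rw [this]
      simp
  set g : n' → ℝ := fun i => ∑ t, Complex.normSq (G t i) with hg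
  set hcol : n' → ℝ := fun i => ∑ t, Complex.normSq (H t i) with hh
  have per_i : ∀ i, s i ≤ Real.sqrt (g i) * Real.sqrt (hcol i) := by
    intro i
    rw [hsdiag i]
    have : (Gᴴ * H) i i = ∑ t, (starRingEnd ℂ) (G t i) * H t i := by
      simp [Matrix.mul_apply, Matrix.conjTranspose_apply]
    rw [this]
    exact re_dot_le _ _
  have total : (∑ i, s i) ≤ Real.sqrt (∑ i, g i) * Real.sqrt (∑ i, hcol i) := by
    have h1 : (∑ i, s i) ≤ ∑ i, Real.sqrt (g i) * Real.sqrt (hcol i) :=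
      Finset.sum_le_sum fun i _ => per_i i
    refine h1.trans ?_
    have h2 : (∑ i, Real.sqrt (g i) * Real.sqrt (hcol i)) ^ 2 ≤ (∑ i, g i) * (∑ i, hcol i) := by
      refine Finset.sum_sq_le_sum_mul_sum_of_sq_eq_mul _
        (fun i _ => Finset.sum_nonneg fun t _ => Complex.normSq_nonneg _)
        (fun i _ => Finset.sum_nonneg fun t _ => Complex.normSq_nonneg _)
        (fun i _ => ?_)
      rw [mul_pow, Real.sq_sqrt (Finset.sum_nonneg fun t _ => Complex.normSq_nonneg _),
        Real.sq_sqrt (Finset.sum_nonneg fun t _ => Complex.normSq_nonneg _)]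
    have h3 : 0 ≤ ∑ i, Real.sqrt (g i) * Real.sqrt (hcol i) :=
      Finset.sum_nonneg fun i _ => mul_nonneg (Real.sqrt_nonneg _) (Real.sqrt_nonneg _)
    calc (∑ i, Real.sqrt (g i) * Real.sqrt (hcol i))
        = Real.sqrt ((∑ i, Real.sqrt (g i) * Real.sqrt (hcol i)) ^ 2) := (Real.sqrt_sq h3).symm
      _ ≤ Real.sqrt ((∑ i, g i) * (∑ i, hcol i)) := Real.sqrt_le_sqrt h2
      _ = _ := Real.sqrt_mul (Finset.sum_nonneg fun i _ =>
          Finset.sum_nonneg fun t _ => Complex.normSq_nonneg _) _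
  have hgsum : (∑ i, g i) ≤ ∑ i, ∑ j, Complex.normSq (L i j) := by
    have e1 : (∑ i, g i) = (Gᴴ * G).trace.re := (trace_conjTranspose_mul_self_re G).symm
    have e3 : (Gᴴ * G).trace = ((L * Lᴴ) * (W * Wᴴ)).trace := by
      have e2 : Gᴴ * G = Wᴴ * ((L * Lᴴ) * W) := by
        rw [hG, Matrix.conjTranspose_mul, Matrix.conjTranspose_conjTranspose]
        simp only [Matrix.mul_assoc]
      rw [e2, Matrix.trace_mul_comm, Matrix.mul_assoc]
    have e4 : (L * Lᴴ).trace.re = ∑ i, ∑ j, Complex.normSq (L i j) := by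
      rw [Matrix.trace_mul_comm, trace_conjTranspose_mul_self_re, Finset.sum_comm]
    rw [e1, e3, ← e4]
    exact htrP
  have hhsum : (∑ i, hcol i) = ∑ i, ∑ j, Complex.normSq (R i j) := by
    have e1 : (∑ i, hcol i) = (Hᴴ * H).trace.re := (trace_conjTranspose_mul_self_re H).symm
    have e2 : (Hᴴ * H).trace = (R * Rᴴ).trace := by
      rw [hH2, Matrix.conjTranspose_mul, Matrix.conjTranspose_conjTranspose]
      calc (Vᴴ * R * (Rᴴ * V)).trace
          = (Vᴴ * (R * Rᴴ) * V).trace := by simp only [Matrix.mul_assoc]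
        _ = (V * Vᴴ * (R * Rᴴ)).trace := by rw [Matrix.trace_mul_cycle]
        _ = (R * Rᴴ).trace := by
            rw [show Vᴴ = star V from rfl, hVV', Matrix.one_mul]
    have e4 : (R * Rᴴ).trace.re = ∑ i, ∑ j, Complex.normSq (R i j) := by
      rw [Matrix.trace_mul_comm, trace_conjTranspose_mul_self_re, Finset.sum_comm]
    rw [e1, e2, e4]
  refine total.trans ?_
  exact mul_le_mul (Real.sqrt_le_sqrt hgsum) (le_of_eq (congrArg Real.sqrt hhsum))
    (Real.sqrt_nonneg _) (Real.sqrt_nonneg _)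

theorem traceNorm_mul_conjTranspose_le {m' n' K : Type*} [Fintype m'] [Fintype n'] [Fintype K]
    [DecidableEq n'] [DecidableEq m']
    (L : Matrix m' K ℂ) (R : Matrix n' K ℂ) :
    traceNorm (L * Rᴴ) ≤
      Real.sqrt (∑ i, ∑ j, Complex.normSq (L i j)) *
      Real.sqrt (∑ i, ∑ j, Complex.normSq (R i j)) := by
  classical
  have hP := Matrix.posSemidef_conjTranspose_mul_self (L * Rᴴ)
  have F1 : traceNorm (L * Rᴴ) = ∑ i, Real.sqrt (hP.1.eigenvalues i) := by
    unfold traceNorm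
    rw [Matrix.trace_mul_cycle, Unitary.coe_star_mul_self, one_mul,
      trace_diagonal, Complex.re_sum]
    rfl
  rw [F1]
  refine sum_sqrt_eig_le L R hP.1.eigenvalues (fun i => hP.eigenvalues_nonneg i)
    (hP.1.eigenvectorUnitary : Matrix n' n' ℂ)
    (Unitary.coe_star_mul_self hP.1.eigenvectorUnitary)
    (Unitary.coe_mul_star_self hP.1.eigenvectorUnitary) ?_
  exact hP.1.spectral_theorem

lemma trace_conjTranspose_mul_self_re' {m K : Type*} [Fintype m] [Fintype K]
    (M : Matrix m K ℂ) :
    (Matrix.trace (Mᴴ * M)).re = ∑ j, ∑ i, Complex.normSq (M i j) := by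
  simp only [Matrix.trace, Matrix.diag, Matrix.mul_apply, Matrix.conjTranspose_apply]
  rw [Complex.re_sum]
  refine Finset.sum_congr rfl fun j _ => ?_
  rw [Complex.re_sum]
  refine Finset.sum_congr rfl fun i _ => ?_
  simp [Complex.normSq_apply, Complex.star_def, Complex.mul_re]

/-- trace of product of Hermitian matrices is real -/
lemma trace_mul_hermitian_real {n : Type*} [Fintype n] {A B : Matrix n n ℂ}
    (hA : A.IsHermitian) (hB : B.IsHermitian) :
    (A * B).trace = (((A * B).trace.re : ℝ) : ℂ) := by
  have h : star ((A * B).trace) = (A * B).trace := by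
    rw [← Matrix.trace_conjTranspose, Matrix.conjTranspose_mul, hA.eq, hB.eq,
      Matrix.trace_mul_comm]
  have him : ((A * B).trace).im = 0 := by
    have := congrArg Complex.im h
    simp only [Complex.star_def, Complex.conj_im] at this
    linarith
  exact (Complex.re_add_im _).symm.trans (by rw [him]; simp)

lemma posSemidef_trace_nonneg {n : Type*} [Fintype n] {A : Matrix n n ℂ}
    (hA : A.PosSemidef) : 0 ≤ A.trace.re := by
  classical
  have hdiag : ∀ i, 0 ≤ (A i i).re := by
    intro i
    have h := hA.re_dotProduct_nonneg (Pi.single i 1)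
    simpa [dotProduct, Matrix.mulVec, Pi.single_apply, Finset.sum_ite_eq,
      dotProduct_single] using h
  rw [Matrix.trace, Complex.re_sum]
  exact Finset.sum_nonneg fun i _ => hdiag i
  
/-- trace of product of two PSD matrices is nonneg -/
lemma trace_mul_posSemidef_nonneg {n : Type*} [Fintype n] [DecidableEq n]
    {A B : Matrix n n ℂ} (hA : A.PosSemidef) (hB : B.PosSemidef) :
    0 ≤ ((A * B).trace).re := by
  classical
  set U : Matrix n n ℂ := (hA.1.eigenvectorUnitary : Matrix n n ℂ) with hU
  set Dh : Matrix n n ℂ :=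
    Matrix.diagonal (fun i => ((Real.sqrt (hA.1.eigenvalues i) : ℝ) : ℂ)) with hDh
  have hDhH : Dhᴴ = Dh := by
    rw [hDh, Matrix.diagonal_conjTranspose]
    congr 1; funext i; simp [Pi.star_apply]
  have hD : Dh * Dh = Matrix.diagonal (RCLike.ofReal ∘ hA.1.eigenvalues) := by
    rw [hDh, Matrix.diagonal_mul_diagonal]
    congr 1; funext i
    rw [← Complex.ofReal_mul, Real.mul_self_sqrt (hA.eigenvalues_nonneg i)]; rfl
  have hAeq : (Dh * star U)ᴴ * (Dh * star U) = A := by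
    rw [Matrix.conjTranspose_mul, hDhH, ← Matrix.star_eq_conjTranspose, star_star,
      Matrix.mul_assoc U, ← Matrix.mul_assoc Dh Dh, hD, ← Matrix.mul_assoc]
    exact hA.1.spectral_theorem.symm
  rw [← hAeq, Matrix.mul_assoc, Matrix.trace_mul_comm]
  exact posSemidef_trace_nonneg (hB.mul_mul_conjTranspose_same _)

/-- Cauchy-Schwarz for traces of Hermitian matrices -/
lemma herm_trace_CS {n : Type*} [Fintype n] {X Y : Matrix n n ℂ}
    (hX : X.IsHermitian) (hY : Y.IsHermitian) :
    ((X * Y).trace.re) ^ 2 ≤ (X * X).trace.re * (Y * Y).trace.re := by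
  set a := (X * X).trace.re
  set b := (X * Y).trace.re
  set c := (Y * Y).trace.re
  have rXX := trace_mul_hermitian_real hX hX
  have rXY := trace_mul_hermitian_real hX hY
  have rYX := trace_mul_hermitian_real hY hY
  have rYX2 := trace_mul_hermitian_real hY hX
  have hYXb : (Y * X).trace.re = b := by rw [Matrix.trace_mul_comm]
  have key : ∀ t : ℝ, 0 ≤ a * (t * t) + (2 * b) * t + c := by
    intro t
    have hfro : 0 ≤ ((((t:ℂ) • X + Y)ᴴ * ((t:ℂ) • X + Y)).trace).re := by
      rw [trace_conjTranspose_mul_self_re']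
      exact Finset.sum_nonneg fun j _ => Finset.sum_nonneg fun i _ => Complex.normSq_nonneg _
    have hexp : (((t:ℂ) • X + Y)ᴴ * ((t:ℂ) • X + Y)).trace
        = (t:ℂ) * (t:ℂ) * (X * X).trace + (t:ℂ) * ((X * Y).trace + (Y * X).trace)
          + (Y * Y).trace := by
      rw [Matrix.conjTranspose_add, Matrix.conjTranspose_smul, hX.eq, hY.eq]
      rw [Matrix.add_mul, Matrix.mul_add, Matrix.mul_add]
      simp only [Matrix.mul_smul, Matrix.smul_mul, smul_smul, Matrix.trace_add,
        Matrix.trace_smul, Complex.star_def, Complex.conj_ofReal, smul_eq_mul]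
      ring
    have hcast : (((t:ℂ) • X + Y)ᴴ * ((t:ℂ) • X + Y)).trace
        = ((a * (t * t) + (2 * b) * t + c : ℝ) : ℂ) := by
      rw [hexp, rXX, rXY, rYX, rYX2, hYXb]
      push_cast
      ring
    rw [hcast] at hfro
    rwa [Complex.ofReal_re] at hfro
  have h4 := discrim_le_zero key
  simp only [discrim] at h4
  nlinarith [h4]

lemma density_trace_sq_le_one {n : Type*} [Fintype n] [DecidableEq n] {ρ : Matrix n n ℂ}
    (hρ : IsDensityMatrix ρ) : ((ρ * ρ).trace).re ≤ 1 := by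
  classical
  obtain ⟨hpsd, htr⟩ := hρ
  set h : ρ.IsHermitian := hpsd.1 with hdef
  set lam := h.eigenvalues with hlam
  set V : Matrix n n ℂ := (h.eigenvectorUnitary : Matrix n n ℂ) with hV
  set D : Matrix n n ℂ := Matrix.diagonal (RCLike.ofReal ∘ lam) with hD
  have hVV : star V * V = 1 := Unitary.coe_star_mul_self h.eigenvectorUnitary
  have hspec : ρ = V * D * star V := h.spectral_theorem
  have htrD : ρ.trace = ∑ i, ((lam i : ℂ)) := by
    rw [hspec, Matrix.trace_mul_cycle, hVV, Matrix.one_mul, hD, Matrix.trace_diagonal]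
    rfl
  have hsum1 : ∑ i, lam i = 1 := by
    have := congrArg Complex.re (htrD.symm.trans htr)
    rw [Complex.re_sum] at this
    simp only [Complex.ofReal_re] at this
    simpa using this
  have hsq : (ρ * ρ).trace = ∑ i, ((lam i : ℂ)) ^ 2 := by
    have hmid : ρ * ρ = V * (D * D) * star V := by
      rw [hspec]
      calc V * D * star V * (V * D * star V)
          = V * D * (star V * V) * D * star V := by simp only [Matrix.mul_assoc]
        _ = V * (D * D) * star V := by rw [hVV]; simp only [Matrix.mul_one, Matrix.mul_assoc]
    rw [hmid, Matrix.trace_mul_cycle, hVV, Matrix.one_mul, hD, Matrix.diagonal_mul_diagonal,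
      Matrix.trace_diagonal]
    refine Finset.sum_congr rfl fun i _ => ?_
    simp [sq]
  have hnn : ∀ i, 0 ≤ lam i := fun i => hpsd.eigenvalues_nonneg i
  have : (ρ * ρ).trace.re = ∑ i, (lam i) ^ 2 := by
    rw [hsq, Complex.re_sum]
    refine Finset.sum_congr rfl fun i _ => ?_
    rw [← Complex.ofReal_pow, Complex.ofReal_re]
  rw [this]
  calc ∑ i, (lam i) ^ 2 ≤ (∑ i, lam i) ^ 2 :=
        Finset.sum_sq_le_sq_sum_of_nonneg fun i _ => hnn i
    _ = 1 := by rw [hsum1]; norm_num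

set_option maxHeartbeats 2000000 in
lemma povm_sum_sq_le {d N M : ℕ} {x : ℝ} {E : Fin N → Fin M → Matrix (Fin d) (Fin d) ℂ}
    (hE : IsNMPOVM d N M x E) (hIC : IsInfoComplete d N M)
    {ρ : Matrix (Fin d) (Fin d) ℂ} (hρ : IsDensityMatrix ρ) :
    ∑ α, ∑ k, (((E α k * ρ).trace).re) ^ 2 ≤
      ((d:ℝ) - 1) * ((d:ℝ)^2 + (M:ℝ)^2 * x) / ((d:ℝ) * M * ((M:ℝ) - 1)) := by
  classical
  obtain ⟨hpos, hsumE, htrE, htrEE, htrEEy, htrEEz, hx1, hx2⟩ := hE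
  have hx2a : x ≤ (d:ℝ)^2 / (M:ℝ)^2 := hx2.trans (min_le_left _ _)
  have hx2b : x ≤ (d:ℝ) / (M:ℝ) := hx2.trans (min_le_right _ _)
  -- numeric sanity
  have hM2 : 2 ≤ M := by
    by_contra hcon
    push_neg at hcon
    interval_cases M <;> simp_all <;> linarith
  have hd2 : 2 ≤ d := by
    by_contra hcon
    push_neg at hcon
    interval_cases d
    · simp_all; linarith
    · simp only [Nat.cast_one, one_pow] at hx1 hx2a
      linarith
  have hMR : (2:ℝ) ≤ (M:ℝ) := by exact_mod_cast hM2
  have hdR : (2:ℝ) ≤ (d:ℝ) := by exact_mod_cast hd2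
  have hM0 : (M:ℝ) ≠ 0 := by linarith
  have hM1 : (M:ℝ) - 1 ≠ 0 := by linarith
  have hd0 : (d:ℝ) ≠ 0 := by linarith
  have hICr : ((M:ℝ) - 1) * N = (d:ℝ)^2 - 1 := hIC
  have hNR : (N:ℝ) = ((d:ℝ)^2 - 1)/((M:ℝ) - 1) := by
    field_simp
    linarith [hICr]
  have hN1 : 1 ≤ N := by
    by_contra hcon
    push_neg at hcon
    interval_cases N
    simp at hICr
    nlinarith
  -- the real POVM probabilities
  set tE : Fin N → Fin M → ℝ := fun α k => (((E α k * ρ).trace).re) with htE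
  have hreal : ∀ α k, (E α k * ρ).trace = ((tE α k : ℝ) : ℂ) := fun α k =>
    trace_mul_hermitian_real (hpos α k).1 hρ.1.1
  have hrow : ∀ α, ∑ k, tE α k = 1 := by
    intro α
    have h1 : ∑ k, (E α k * ρ).trace = 1 := by
      rw [← Matrix.trace_sum, ← Matrix.sum_mul, hsumE α, Matrix.one_mul, hρ.2]
    have := congrArg Complex.re h1
    rw [Complex.re_sum] at this
    simpa using this
  set S : ℝ := ∑ α, ∑ k, (tE α k) ^ 2 with hS
  set y : ℝ := ((d:ℝ) - M*x)/((M:ℝ) * ((M:ℝ) - 1)) with hy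
  set z : ℝ := (d:ℝ)/(M:ℝ)^2 with hz
  set u : ℝ := ((M:ℝ)^2 * x - d)/((M:ℝ) * ((M:ℝ) - 1)) with hu
  set A : Matrix (Fin d) (Fin d) ℂ := ∑ α, ∑ k, ((tE α k : ℝ) : ℂ) • E α k with hA
  have hAH : A.IsHermitian := by
    show Aᴴ = A
    rw [hA]
    simp only [Matrix.conjTranspose_sum, Matrix.conjTranspose_smul]
    refine Finset.sum_congr rfl fun α _ => Finset.sum_congr rfl fun k _ => ?_
    rw [(hpos α k).1.eq]
    simp [Complex.star_def, Complex.conj_ofReal]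
  have htot : ∑ α, ∑ k, tE α k = (N:ℝ) := by
    simp [hrow]
  have htrA : A.trace = (((N:ℝ) * ((d:ℝ)/(M:ℝ)) : ℝ) : ℂ) := by
    rw [hA]
    rw [Matrix.trace_sum]
    simp only [Matrix.trace_sum, Matrix.trace_smul]
    have : ∀ α k, (tE α k : ℂ) • (E α k).trace = ((tE α k * ((d:ℝ)/(M:ℝ)) : ℝ) : ℂ) := by
      intro α k; rw [htrE α k, smul_eq_mul]; push_cast; ring
    calc ∑ α, ∑ k, (tE α k : ℂ) • (E α k).trace
        = ∑ α, ∑ k, ((tE α k * ((d:ℝ)/(M:ℝ)) : ℝ) : ℂ) := by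
          refine Finset.sum_congr rfl fun α _ => Finset.sum_congr rfl fun k _ => this α k
      _ = (((∑ α, ∑ k, tE α k) * ((d:ℝ)/(M:ℝ)) : ℝ) : ℂ) := by
          push_cast
          rw [Finset.sum_mul]
          refine Finset.sum_congr rfl fun α _ => ?_
          rw [Finset.sum_mul]
      _ = _ := by rw [htot]
  have htrArho : (A * ρ).trace = ((S : ℝ) : ℂ) := by
    rw [hA, Matrix.sum_mul, Matrix.trace_sum]
    have : ∀ α, ((∑ k, ((tE α k : ℝ) : ℂ) • E α k) * ρ).trace
        = ∑ k, ((tE α k : ℝ) : ℂ)^2 := by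
      intro α
      rw [Matrix.sum_mul, Matrix.trace_sum]
      refine Finset.sum_congr rfl fun k _ => ?_
      rw [Matrix.smul_mul, Matrix.trace_smul, hreal α k]
      rw [smul_eq_mul, sq]
    rw [hS]
    push_cast
    exact Finset.sum_congr rfl fun α _ => this α
  -- trace of E α k * A
  have hrowC : ∀ α, ∑ l, ((tE α l : ℝ) : ℂ) = 1 := by
    intro α
    push_cast [← Complex.ofReal_sum]
    rw [hrow α]
    norm_num
  have hEA : ∀ α k, (E α k * A).trace
      = ((x * tE α k + y * (1 - tE α k) + z * ((N:ℝ) - 1) : ℝ) : ℂ) := by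
    intro α k
    rw [hA, Matrix.mul_sum, Matrix.trace_sum]
    have hinner : ∀ β, (E α k * ∑ l, ((tE β l : ℝ) : ℂ) • E β l).trace
        = ∑ l, ((tE β l : ℝ) : ℂ) * (E α k * E β l).trace := by
      intro β
      rw [Matrix.mul_sum, Matrix.trace_sum]
      refine Finset.sum_congr rfl fun l _ => ?_
      rw [Matrix.mul_smul, Matrix.trace_smul, smul_eq_mul]
    calc (∑ β, (E α k * ∑ l, ((tE β l : ℝ) : ℂ) • E β l).trace)
        = ∑ β, ∑ l, ((tE β l : ℝ) : ℂ) * (E α k * E β l).trace := by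
          refine Finset.sum_congr rfl fun β _ => hinner β
      _ = (∑ l, ((tE α l : ℝ) : ℂ) * (E α k * E α l).trace)
          + ∑ β ∈ Finset.univ.erase α, ∑ l, ((tE β l : ℝ) : ℂ) * (E α k * E β l).trace := by
          rw [← Finset.add_sum_erase Finset.univ _ (Finset.mem_univ α)]
      _ = ((x * tE α k + y * (1 - tE α k) + z * ((N:ℝ) - 1) : ℝ) : ℂ) := by
          have hfirst : (∑ l, ((tE α l : ℝ) : ℂ) * (E α k * E α l).trace)
              = ((x * tE α k + y * (1 - tE α k) : ℝ) : ℂ) := by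
            calc (∑ l, ((tE α l : ℝ) : ℂ) * (E α k * E α l).trace)
                = ((tE α k : ℝ) : ℂ) * (E α k * E α k).trace
                  + ∑ l ∈ Finset.univ.erase k, ((tE α l : ℝ) : ℂ) * (E α k * E α l).trace := by
                  rw [← Finset.add_sum_erase Finset.univ _ (Finset.mem_univ k)]
              _ = ((tE α k : ℝ) : ℂ) * ((x:ℝ):ℂ)
                  + ∑ l ∈ Finset.univ.erase k, ((tE α l : ℝ) : ℂ) * ((y:ℝ):ℂ) := by
                  rw [htrEE α k]
                  congr 1
                  refine Finset.sum_congr rfl fun l hl => ?_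
                  rw [htrEEy α k l (Ne.symm (Finset.mem_erase.mp hl).1), hy]
              _ = ((tE α k : ℝ) : ℂ) * ((x:ℝ):ℂ)
                  + (1 - ((tE α k : ℝ) : ℂ)) * ((y:ℝ):ℂ) := by
                  congr 1
                  rw [← Finset.sum_mul]
                  congr 1
                  have := hrowC α
                  rw [← Finset.add_sum_erase Finset.univ _ (Finset.mem_univ k)] at this
                  linear_combination this
              _ = _ := by push_cast; ring
          have hsecond : (∑ β ∈ Finset.univ.erase α, ∑ l, ((tE β l : ℝ) : ℂ)
                * (E α k * E β l).trace) = ((z * ((N:ℝ) - 1) : ℝ) : ℂ) := by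
            have hper : ∀ β ∈ Finset.univ.erase α, (∑ l, ((tE β l : ℝ) : ℂ)
                * (E α k * E β l).trace) = ((z:ℝ):ℂ) := by
              intro β hβ
              have hne : α ≠ β := Ne.symm (Finset.mem_erase.mp hβ).1
              calc (∑ l, ((tE β l : ℝ) : ℂ) * (E α k * E β l).trace)
                  = ∑ l, ((tE β l : ℝ) : ℂ) * ((z:ℝ):ℂ) := by
                    refine Finset.sum_congr rfl fun l _ => ?_
                    rw [htrEEz α β k l hne]
                _ = ((z:ℝ):ℂ) := by rw [← Finset.sum_mul, hrowC β, one_mul]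
            rw [Finset.sum_congr rfl hper, Finset.sum_const, Finset.card_erase_of_mem
              (Finset.mem_univ α), Finset.card_univ, Fintype.card_fin]
            rw [nsmul_eq_mul]
            push_cast [Nat.cast_sub hN1]
            ring
          rw [hfirst, hsecond]
          push_cast
          ring
  have htrAA : (A * A).trace
      = (((x - y) * S + (y + z * ((N:ℝ) - 1)) * (N:ℝ) : ℝ) : ℂ) := by
    rw [hA, Matrix.sum_mul, Matrix.trace_sum]
    have hper : ∀ α, ((∑ k, ((tE α k : ℝ) : ℂ) • E α k) * A).trace
        = ∑ k, (((x - y) * (tE α k)^2 + (y + z * ((N:ℝ) - 1)) * tE α k : ℝ) : ℂ) := by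
      intro α
      rw [Matrix.sum_mul, Matrix.trace_sum]
      refine Finset.sum_congr rfl fun k _ => ?_
      rw [Matrix.smul_mul, Matrix.trace_smul, hEA α k, smul_eq_mul, ← Complex.ofReal_mul]
      congr 1
      ring
    calc (∑ α, ((∑ k, ((tE α k : ℝ) : ℂ) • E α k) * A).trace)
        = ∑ α, ∑ k, (((x - y) * (tE α k)^2 + (y + z * ((N:ℝ) - 1)) * tE α k : ℝ) : ℂ) := by
          exact Finset.sum_congr rfl fun α _ => hper α
      _ = ((∑ α, ∑ k, ((x - y) * (tE α k)^2 + (y + z * ((N:ℝ) - 1)) * tE α k) : ℝ) : ℂ) := by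
          push_cast; rfl
      _ = _ := by
          congr 1
          rw [show (∑ α, ∑ k, ((x - y) * (tE α k)^2 + (y + z * ((N:ℝ) - 1)) * tE α k))
            = (x - y) * (∑ α, ∑ k, (tE α k)^2)
              + (y + z * ((N:ℝ) - 1)) * (∑ α, ∑ k, tE α k) from by
            rw [Finset.mul_sum, Finset.mul_sum, ← Finset.sum_add_distrib]
            refine Finset.sum_congr rfl fun α _ => ?_
            rw [Finset.mul_sum, Finset.mul_sum, ← Finset.sum_add_distrib]]
          rw [htot, hS]
  -- centered matrices
  have hρH : ρ.IsHermitian := hρ.1.1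
  set c1 : ℝ := (N:ℝ)/(M:ℝ) with hc1
  set c2 : ℝ := 1/(d:ℝ) with hc2
  set X := A - ((c1:ℝ):ℂ) • (1 : Matrix (Fin d) (Fin d) ℂ) with hX
  set Y := ρ - ((c2:ℝ):ℂ) • (1 : Matrix (Fin d) (Fin d) ℂ) with hY
  have hXH : X.IsHermitian := by
    show Xᴴ = X
    rw [hX, Matrix.conjTranspose_sub, hAH.eq, Matrix.conjTranspose_smul,
      Matrix.conjTranspose_one]
    simp [Complex.star_def, Complex.conj_ofReal]
  have hYH : Y.IsHermitian := by
    show Yᴴ = Y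
    rw [hY, Matrix.conjTranspose_sub, hρH.eq, Matrix.conjTranspose_smul,
      Matrix.conjTranspose_one]
    simp [Complex.star_def, Complex.conj_ofReal]
  have hd0C : ((d:ℕ):ℂ) ≠ 0 := by exact_mod_cast hd0
  have hM0C : ((M:ℕ):ℂ) ≠ 0 := by exact_mod_cast hM0
  have hM1C : ((M:ℕ):ℂ) - 1 ≠ 0 := by
    intro hcon
    apply hM1
    have : ((M:ℝ):ℂ) = 1 := by push_cast at hcon ⊢; linear_combination hcon
    have := Complex.ofReal_inj.mp (by push_cast at this ⊢; exact this : ((M:ℝ):ℂ) = ((1:ℝ):ℂ))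
    linarith
  have trXY : (X * Y).trace = ((S - c1 : ℝ):ℂ) := by
    rw [hX, hY]
    simp only [Matrix.sub_mul, Matrix.mul_sub, Matrix.smul_mul, Matrix.mul_smul,
      Matrix.trace_sub, Matrix.trace_smul, smul_smul, Matrix.mul_one, Matrix.one_mul,
      Matrix.trace_one, htrArho, htrA, hρ.2, smul_eq_mul, Fintype.card_fin]
    rw [hc1]
    push_cast
    field_simp
    ring
  have trXX : (X * X).trace = ((u * (S - c1) : ℝ):ℂ) := by
    rw [hX]
    simp only [Matrix.sub_mul, Matrix.mul_sub, Matrix.smul_mul, Matrix.mul_smul,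
      Matrix.trace_sub, Matrix.trace_smul, smul_smul, Matrix.mul_one, Matrix.one_mul,
      Matrix.trace_one, htrAA, htrA, smul_eq_mul, Fintype.card_fin]
    rw [hu, hy, hz, hc1]
    push_cast
    field_simp [hd0C, hM0C, hM1C]
    ring
  set r : ℝ := ((ρ * ρ).trace).re with hr
  have hrr : (ρ * ρ).trace = ((r : ℝ):ℂ) := trace_mul_hermitian_real hρH hρH
  have trYY : (Y * Y).trace = ((r - c2 : ℝ):ℂ) := by
    rw [hY]
    simp only [Matrix.sub_mul, Matrix.mul_sub, Matrix.smul_mul, Matrix.mul_smul,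
      Matrix.trace_sub, Matrix.trace_smul, smul_smul, Matrix.mul_one, Matrix.one_mul,
      Matrix.trace_one, hrr, hρ.2, smul_eq_mul, Fintype.card_fin]
    rw [hc2]
    push_cast
    field_simp
    ring
  have reXY : ((X * Y).trace).re = S - c1 := by rw [trXY, Complex.ofReal_re]
  have reXX : ((X * X).trace).re = u * (S - c1) := by rw [trXX, Complex.ofReal_re]
  have reYY : ((Y * Y).trace).re = r - c2 := by rw [trYY, Complex.ofReal_re]
  have hCS := herm_trace_CS hXH hYH
  rw [reXY, reXX, reYY] at hCS
  have hXXnn : 0 ≤ u * (S - c1) := by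
    rw [← reXX]
    have h0 : 0 ≤ ((Xᴴ * X).trace).re := by
      rw [trace_conjTranspose_mul_self_re']
      exact Finset.sum_nonneg fun j _ => Finset.sum_nonneg fun i _ => Complex.normSq_nonneg _
    rwa [hXH.eq] at h0
  have hYYnn : 0 ≤ r - c2 := by
    rw [← reYY]
    have h0 : 0 ≤ ((Yᴴ * Y).trace).re := by
      rw [trace_conjTranspose_mul_self_re']
      exact Finset.sum_nonneg fun j _ => Finset.sum_nonneg fun i _ => Complex.normSq_nonneg _
    rwa [hYH.eq] at h0
  have hrle : r ≤ 1 := density_trace_sq_le_one hρ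
  have hun : 0 ≤ u := by
    have hM2pos : (0:ℝ) < (M:ℝ)^2 := by positivity
    have hx1' : z < x := hx1
    rw [hz, div_lt_iff₀ hM2pos] at hx1'
    rw [hu]
    apply div_nonneg
    · nlinarith
    · nlinarith
  have hceq : ((d:ℝ) - 1) * ((d:ℝ)^2 + (M:ℝ)^2 * x) / ((d:ℝ) * M * ((M:ℝ) - 1))
      = c1 + u * (((d:ℝ) - 1)/(d:ℝ)) := by
    rw [hc1, hu, hNR]
    field_simp
    ring
  rw [hceq]
  have hYYle : r - c2 ≤ ((d:ℝ) - 1)/(d:ℝ) := by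
    have : ((d:ℝ) - 1)/(d:ℝ) = 1 - c2 := by rw [hc2]; field_simp
    rw [this]
    linarith
  rcases le_or_gt (S - c1) 0 with hT | hT
  · have h1 : 0 ≤ u * (((d:ℝ) - 1)/(d:ℝ)) := by
      apply mul_nonneg hun
      apply div_nonneg <;> linarith
    linarith
  · have step1 : (S - c1)^2 ≤ (u * (S - c1)) * (((d:ℝ) - 1)/(d:ℝ)) :=
      hCS.trans (mul_le_mul_of_nonneg_left hYYle hXXnn)
    have step2 : S - c1 ≤ u * (((d:ℝ) - 1)/(d:ℝ)) := by
      nlinarith [step1, hT]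
    linarith

lemma famWith_self {nn : ℕ} (F : Fin nn → Type*) (q : Fin nn) (xq : F q)
    (y : ∀ i, i ≠ q → F i) : famWith F q xq y q = xq := dif_pos rfl

lemma famWith_ne {nn : ℕ} (F : Fin nn → Type*) (q : Fin nn) (xq : F q)
    (y : ∀ i, i ≠ q → F i) {i : Fin nn} (h : i ≠ q) : famWith F q xq y i = y i h := dif_neg h

lemma famKron_mul_trace {nn : ℕ} {d : Fin nn → ℕ}
    (A B : ∀ i, Matrix (Fin (d i)) (Fin (d i)) ℂ) :
    (famKron A * famKron B).trace = ∏ i, (A i * B i).trace := by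
  classical
  calc (famKron A * famKron B).trace
      = ∑ f : (∀ i, Fin (d i)), ∑ g : (∀ i, Fin (d i)),
          ∏ i, (A i (f i) (g i) * B i (g i) (f i)) := by
        simp only [Matrix.trace, Matrix.diag, Matrix.mul_apply, famKron, Matrix.of_apply,
          Finset.prod_mul_distrib]
    _ = ∑ f : (∀ i, Fin (d i)), ∏ i, (∑ b, A i (f i) b * B i b (f i)) :=
        Finset.sum_congr rfl fun f _ =>
          (Fintype.prod_sum (fun i b => A i (f i) b * B i b (f i))).symm
    _ = ∏ i, ∑ a, ∑ b, A i a b * B i b a :=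
        (Fintype.prod_sum (fun i a => ∑ b, A i a b * B i b a)).symm
    _ = ∏ i, (A i * B i).trace := by
        simp only [Matrix.trace, Matrix.diag, Matrix.mul_apply]

end AuxProofs

set_option maxHeartbeats 2000000 in
/-- Theorem 2 of the paper: for a fully separable n-partite
state ρ, a fixed subsystem A_q, arbitrary real vectors a, b, and
informationally complete (N_{A_i},M_{A_i})-POVMs on each subsystem,
‖Q_{a,b}(ρ_{A_1⋯Â_q⋯A_n})‖_tr ≤
√((|a|² + (d_{A_q}−1)(d_{A_q}²+M_{A_q}²x_{A_q})/(d_{A_q}M_{A_q}(M_{A_q}−1))) ·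
  (|b|² + ∏_{i≠q} ((d_{A_i}−1)/d_{A_i})·(d_{A_i}²+M_{A_i}²x_{A_i})/(M_{A_i}(M_{A_i}−1)))). -/
theorem multipartite_separability_criterion
    (nn m n : ℕ) (d N M : Fin nn → ℕ) (x : Fin nn → ℝ) (q : Fin nn)
    (E : ∀ i, Fin (N i) → Fin (M i) → Matrix (Fin (d i)) (Fin (d i)) ℂ)
    (hE : ∀ i, IsNMPOVM (d i) (N i) (M i) (x i) (E i))
    (hIC : ∀ i, IsInfoComplete (d i) (N i) (M i))
    (a : Fin m → ℝ) (b : Fin n → ℝ)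
    (ρ : Matrix (∀ i, Fin (d i)) (∀ i, Fin (d i)) ℂ)
    (hρ : IsDensityMatrix ρ) (hsep : FullySeparable ρ) :
    traceNorm (Matrix.fromBlocks
      (Matrix.of fun (i : Fin m) (j : Fin n) => ((a i : ℂ) * (b j : ℂ)))
      (Matrix.of fun (i : Fin m)
          (γ : (i' : {j : Fin nn // j ≠ q}) → Fin (N i'.1) × Fin (M i'.1)) =>
        (a i : ℂ) *
          (famKron (famWith (fun i' => Matrix (Fin (d i')) (Fin (d i')) ℂ) q
              (1 : Matrix (Fin (d q)) (Fin (d q)) ℂ)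
              (fun i' h => E i' (γ ⟨i', h⟩).1 (γ ⟨i', h⟩).2)) * ρ).trace)
      (Matrix.of fun (p : Fin (N q) × Fin (M q)) (j : Fin n) =>
        (famKron (famWith (fun i' => Matrix (Fin (d i')) (Fin (d i')) ℂ) q
            (E q p.1 p.2)
            (fun i' _ => (1 : Matrix (Fin (d i')) (Fin (d i')) ℂ))) * ρ).trace *
          (b j : ℂ))
      (Matrix.of fun (p : Fin (N q) × Fin (M q))
          (γ : (i' : {j : Fin nn // j ≠ q}) → Fin (N i'.1) × Fin (M i'.1)) =>
        (famKron (famWith (fun i' => Matrix (Fin (d i')) (Fin (d i')) ℂ) q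
            (E q p.1 p.2)
            (fun i' h => E i' (γ ⟨i', h⟩).1 (γ ⟨i', h⟩).2)) * ρ).trace)) ≤
    Real.sqrt (
      (∑ i, a i ^ 2 +
        ((d q : ℝ) - 1) * ((d q : ℝ) ^ 2 + (M q : ℝ) ^ 2 * x q) /
          ((d q : ℝ) * (M q : ℝ) * ((M q : ℝ) - 1))) *
      (∑ j, b j ^ 2 +
        ∏ i ∈ Finset.univ.erase q, ((d i : ℝ) - 1) / (d i) *
          (((d i : ℝ) ^ 2 + (M i : ℝ) ^ 2 * x i) /
            ((M i : ℝ) * ((M i : ℝ) - 1))))) := by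
  classical
  obtain ⟨K, p, ρs, hp0, hp1, hdm, hρeq⟩ := hsep
  -- real-valued local probabilities
  set t : ∀ (i : Fin nn), Fin (N i) → Fin (M i) → Fin K → ℝ :=
    fun i α k j => ((E i α k * ρs j i).trace).re with ht
  have hreal : ∀ (i : Fin nn) (α : Fin (N i)) (k : Fin (M i)) (j : Fin K),
      (E i α k * ρs j i).trace = ((t i α k j : ℝ) : ℂ) :=
    fun i α k j => trace_mul_hermitian_real ((hE i).1 α k).1 (hdm j i).1.1
  set σv : ((i' : {j : Fin nn // j ≠ q}) → Fin (N i'.1) × Fin (M i'.1)) → Fin K → ℝ :=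
    fun γ j => ∏ i' : {jj : Fin nn // jj ≠ q}, t i'.1 (γ i').1 (γ i').2 j with hσv
  set L : Matrix (Fin m ⊕ (Fin (N q) × Fin (M q))) (Fin K) ℂ :=
    Matrix.of fun r j =>
      ((Real.sqrt (p j) * Sum.elim a (fun pr => t q pr.1 pr.2 j) r : ℝ) : ℂ) with hL
  set R : Matrix (Fin n ⊕ ((i' : {j : Fin nn // j ≠ q}) → Fin (N i'.1) × Fin (M i'.1)))
      (Fin K) ℂ :=
    Matrix.of fun c j =>
      ((Real.sqrt (p j) * Sum.elim b (fun γ => σv γ j) c : ℝ) : ℂ) with hR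
  have hps : ∀ j, Real.sqrt (p j) * Real.sqrt (p j) = p j := fun j => Real.mul_self_sqrt (hp0 j)
  have hpsC : ∀ j, ((p j : ℝ) : ℂ)
      = ((Real.sqrt (p j) : ℝ) : ℂ) * ((Real.sqrt (p j) : ℝ) : ℂ) := fun j => by
    rw [← Complex.ofReal_mul, hps j]
  have hp1C : ∑ j, ((p j : ℝ) : ℂ) = 1 := by rw [← Complex.ofReal_sum, hp1, Complex.ofReal_one]
  -- master trace formula
  have hbig : ∀ (Xq : Matrix (Fin (d q)) (Fin (d q)) ℂ)
      (y : ∀ i, i ≠ q → Matrix (Fin (d i)) (Fin (d i)) ℂ) (j : Fin K),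
      (famKron (famWith (fun i => Matrix (Fin (d i)) (Fin (d i)) ℂ) q Xq y)
          * famKron (ρs j)).trace
        = (Xq * ρs j q).trace
            * ∏ i' : {jj : Fin nn // jj ≠ q}, (y i'.1 i'.2 * ρs j i'.1).trace := by
    intro Xq y j
    rw [famKron_mul_trace]
    rw [← Finset.mul_prod_erase Finset.univ _ (Finset.mem_univ q)]
    congr 1
    · rw [famWith_self]
    · rw [Finset.prod_subtype (p := fun i => i ≠ q) (Finset.univ.erase q)
        (fun x => by simp) (fun i => (famWith _ q Xq y i * ρs j i).trace)]
      refine Finset.prod_congr rfl fun i' _ => ?_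
      rw [famWith_ne _ _ _ _ i'.2]
  have hQtr : ∀ (Xq : Matrix (Fin (d q)) (Fin (d q)) ℂ)
      (y : ∀ i, i ≠ q → Matrix (Fin (d i)) (Fin (d i)) ℂ),
      (famKron (famWith (fun i => Matrix (Fin (d i)) (Fin (d i)) ℂ) q Xq y) * ρ).trace
        = ∑ j, (p j : ℂ) * ((Xq * ρs j q).trace
            * ∏ i' : {jj : Fin nn // jj ≠ q}, (y i'.1 i'.2 * ρs j i'.1).trace) := by
    intro Xq y
    rw [hρeq, Matrix.mul_sum, Matrix.trace_sum]
    refine Finset.sum_congr rfl fun j _ => ?_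
    rw [Matrix.mul_smul, Matrix.trace_smul, smul_eq_mul, hbig]
  have hσ : ∀ (γ : (i' : {j : Fin nn // j ≠ q}) → Fin (N i'.1) × Fin (M i'.1)) (j : Fin K),
      (∏ i' : {jj : Fin nn // jj ≠ q},
        (E i'.1 (γ ⟨i'.1, i'.2⟩).1 (γ ⟨i'.1, i'.2⟩).2 * ρs j i'.1).trace)
      = ((σv γ j : ℝ) : ℂ) := by
    intro γ j
    rw [hσv, Complex.ofReal_prod]
    exact Finset.prod_congr rfl fun i' _ => hreal _ _ _ _
  have hone : ∀ (j : Fin K),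
      (∏ i' : {jj : Fin nn // jj ≠ q},
        ((1 : Matrix (Fin (d i'.1)) (Fin (d i'.1)) ℂ) * ρs j i'.1).trace) = 1 := by
    intro j
    refine Finset.prod_eq_one fun i' _ => ?_
    rw [Matrix.one_mul, (hdm j i'.1).2]
  -- the factorization
  have hQ : (Matrix.fromBlocks
      (Matrix.of fun (i : Fin m) (j : Fin n) => ((a i : ℂ) * (b j : ℂ)))
      (Matrix.of fun (i : Fin m)
          (γ : (i' : {j : Fin nn // j ≠ q}) → Fin (N i'.1) × Fin (M i'.1)) =>
        (a i : ℂ) *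
          (famKron (famWith (fun i' => Matrix (Fin (d i')) (Fin (d i')) ℂ) q
              (1 : Matrix (Fin (d q)) (Fin (d q)) ℂ)
              (fun i' h => E i' (γ ⟨i', h⟩).1 (γ ⟨i', h⟩).2)) * ρ).trace)
      (Matrix.of fun (p : Fin (N q) × Fin (M q)) (j : Fin n) =>
        (famKron (famWith (fun i' => Matrix (Fin (d i')) (Fin (d i')) ℂ) q
            (E q p.1 p.2)
            (fun i' _ => (1 : Matrix (Fin (d i')) (Fin (d i')) ℂ))) * ρ).trace *
          (b j : ℂ))
      (Matrix.of fun (p : Fin (N q) × Fin (M q))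
          (γ : (i' : {j : Fin nn // j ≠ q}) → Fin (N i'.1) × Fin (M i'.1)) =>
        (famKron (famWith (fun i' => Matrix (Fin (d i')) (Fin (d i')) ℂ) q
            (E q p.1 p.2)
            (fun i' h => E i' (γ ⟨i', h⟩).1 (γ ⟨i', h⟩).2)) * ρ).trace)) = L * Rᴴ := by
    ext r c
    rw [Matrix.mul_apply]
    cases r with
    | inl i =>
      cases c with
      | inl i' =>
        simp only [Matrix.fromBlocks_apply₁₁, Matrix.of_apply, Matrix.conjTranspose_apply,
          hL, hR, Sum.elim_inl, Complex.star_def, Complex.conj_ofReal]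
        calc ((a i : ℂ) * (b i' : ℂ))
            = ∑ j, ((p j : ℝ) : ℂ) * ((a i * b i' : ℝ) : ℂ) := by
              rw [← Finset.sum_mul, hp1C, one_mul]; push_cast; ring
          _ = _ := by
              refine Finset.sum_congr rfl fun j _ => ?_
              rw [hpsC j]
              push_cast
              ring
      | inr γ =>
        simp only [Matrix.fromBlocks_apply₁₂, Matrix.of_apply, Matrix.conjTranspose_apply,
          hL, hR, Sum.elim_inl, Sum.elim_inr, Complex.star_def, Complex.conj_ofReal]
        rw [hQtr, Finset.mul_sum]
        refine Finset.sum_congr rfl fun j _ => ?_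
        rw [Matrix.one_mul, (hdm j q).2, hσ γ j, hpsC j]
        push_cast
        ring
    | inr pr =>
      cases c with
      | inl i' =>
        simp only [Matrix.fromBlocks_apply₂₁, Matrix.of_apply, Matrix.conjTranspose_apply,
          hL, hR, Sum.elim_inl, Sum.elim_inr, Complex.star_def, Complex.conj_ofReal]
        rw [hQtr, Finset.sum_mul]
        refine Finset.sum_congr rfl fun j _ => ?_
        rw [hone j, hreal q pr.1 pr.2 j, hpsC j]
        push_cast
        ring
      | inr γ =>
        simp only [Matrix.fromBlocks_apply₂₂, Matrix.of_apply, Matrix.conjTranspose_apply,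
          hL, hR, Sum.elim_inr, Complex.star_def, Complex.conj_ofReal]
        rw [hQtr]
        refine Finset.sum_congr rfl fun j _ => ?_
        rw [hσ γ j, hreal q pr.1 pr.2 j, hpsC j]
        push_cast
        ring
  -- constants
  set cI : Fin nn → ℝ := fun i =>
    ((d i : ℝ) - 1) * ((d i : ℝ) ^ 2 + (M i : ℝ) ^ 2 * x i) /
      ((d i : ℝ) * (M i : ℝ) * ((M i : ℝ) - 1)) with hcI
  have hC : ∀ (i : Fin nn) (j : Fin K), (∑ α, ∑ k, (t i α k j) ^ 2) ≤ cI i :=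
    fun i j => povm_sum_sq_le (hE i) (hIC i) (hdm j i)
  have hnorm : ∀ (w : ℝ) (j : Fin K),
      Complex.normSq (((Real.sqrt (p j) * w : ℝ) : ℂ)) = p j * w ^ 2 := by
    intro w j
    rw [Complex.normSq_ofReal]
    calc (Real.sqrt (p j) * w) * (Real.sqrt (p j) * w)
        = (Real.sqrt (p j) * Real.sqrt (p j)) * (w * w) := by ring
      _ = p j * w ^ 2 := by rw [hps j]; ring
  have hsq_nonneg : ∀ (i : Fin nn) (j : Fin K), (0:ℝ) ≤ ∑ α, ∑ k, (t i α k j) ^ 2 :=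
    fun i j => Finset.sum_nonneg fun α _ => Finset.sum_nonneg fun k _ => sq_nonneg _
  -- Frobenius bounds
  have hFL : (∑ r, ∑ j, Complex.normSq (L r j)) ≤ (∑ i, a i ^ 2) + cI q := by
    calc (∑ r, ∑ j, Complex.normSq (L r j))
        = (∑ i, ∑ j, p j * (a i) ^ 2)
          + (∑ pr : Fin (N q) × Fin (M q), ∑ j, p j * (t q pr.1 pr.2 j) ^ 2) := by
          rw [Fintype.sum_sum_type]
          congr 1
          · exact Finset.sum_congr rfl fun i _ => Finset.sum_congr rfl fun j _ => by
              simp only [hL, Matrix.of_apply, Sum.elim_inl]; exact hnorm (a i) j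
          · exact Finset.sum_congr rfl fun pr _ => Finset.sum_congr rfl fun j _ => by
              simp only [hL, Matrix.of_apply, Sum.elim_inr]; exact hnorm _ j
      _ = ∑ j, p j * ((∑ i, a i ^ 2) + (∑ α, ∑ k, (t q α k j) ^ 2)) := by
          have e1 : (∑ i, ∑ j, p j * (a i) ^ 2) = ∑ j, ∑ i, p j * (a i) ^ 2 :=
            Finset.sum_comm
          have e2 : (∑ pr : Fin (N q) × Fin (M q), ∑ j, p j * (t q pr.1 pr.2 j) ^ 2)
              = ∑ j, ∑ pr : Fin (N q) × Fin (M q), p j * (t q pr.1 pr.2 j) ^ 2 :=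
            Finset.sum_comm
          rw [e1, e2, ← Finset.sum_add_distrib]
          refine Finset.sum_congr rfl fun j _ => ?_
          rw [← Finset.mul_sum, ← Finset.mul_sum, ← mul_add, Fintype.sum_prod_type]
      _ ≤ ∑ j, p j * ((∑ i, a i ^ 2) + cI q) := by
          refine Finset.sum_le_sum fun j _ => ?_
          exact mul_le_mul_of_nonneg_left (add_le_add_right (hC q j) _) (hp0 j)
      _ = (∑ i, a i ^ 2) + cI q := by
          rw [← Finset.sum_mul, hp1, one_mul]
  have hsub : ∀ (f : Fin nn → ℝ),
      (∏ i ∈ Finset.univ.erase q, f i) = ∏ i' : {jj : Fin nn // jj ≠ q}, f i'.1 := by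
    intro f
    exact Finset.prod_subtype (p := fun i => i ≠ q) (Finset.univ.erase q) (fun x => by simp) f
  have hFR : (∑ c, ∑ j, Complex.normSq (R c j)) ≤
      (∑ j, b j ^ 2) + ∏ i ∈ Finset.univ.erase q, cI i := by
    calc (∑ c, ∑ j, Complex.normSq (R c j))
        = (∑ i, ∑ j, p j * (b i) ^ 2)
          + (∑ γ : (i' : {jj : Fin nn // jj ≠ q}) → Fin (N i'.1) × Fin (M i'.1),
              ∑ j, p j * (σv γ j) ^ 2) := by
          rw [Fintype.sum_sum_type]
          congr 1
          · exact Finset.sum_congr rfl fun i _ => Finset.sum_congr rfl fun j _ => by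
              simp only [hR, Matrix.of_apply, Sum.elim_inl]; exact hnorm (b i) j
          · exact Finset.sum_congr rfl fun γ _ => Finset.sum_congr rfl fun j _ => by
              simp only [hR, Matrix.of_apply, Sum.elim_inr]; exact hnorm _ j
      _ = ∑ j, p j * ((∑ i, b i ^ 2) + (∑ γ, (σv γ j) ^ 2)) := by
          have e1 : (∑ i, ∑ j, p j * (b i) ^ 2) = ∑ j, ∑ i, p j * (b i) ^ 2 :=
            Finset.sum_comm
          have e2 : (∑ γ : (i' : {jj : Fin nn // jj ≠ q}) → Fin (N i'.1) × Fin (M i'.1),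
              ∑ j, p j * (σv γ j) ^ 2)
              = ∑ j, ∑ γ : (i' : {jj : Fin nn // jj ≠ q}) → Fin (N i'.1) × Fin (M i'.1),
                p j * (σv γ j) ^ 2 :=
            Finset.sum_comm
          rw [e1, e2, ← Finset.sum_add_distrib]
          refine Finset.sum_congr rfl fun j _ => ?_
          rw [← Finset.mul_sum, ← Finset.mul_sum, ← mul_add]
      _ ≤ ∑ j, p j * ((∑ i, b i ^ 2) + ∏ i ∈ Finset.univ.erase q, cI i) := by
          refine Finset.sum_le_sum fun j _ => ?_
          refine mul_le_mul_of_nonneg_left (add_le_add_right ?_ _) (hp0 j)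
          have hσsq : (∑ γ, (σv γ j) ^ 2)
              = ∏ i' : {jj : Fin nn // jj ≠ q},
                  (∑ pr : Fin (N i'.1) × Fin (M i'.1), (t i'.1 pr.1 pr.2 j) ^ 2) := by
            simp only [hσv]
            calc (∑ γ : (i' : {jj : Fin nn // jj ≠ q}) → Fin (N i'.1) × Fin (M i'.1),
                  (∏ i', t i'.1 (γ i').1 (γ i').2 j) ^ 2)
                = ∑ γ : (i' : {jj : Fin nn // jj ≠ q}) → Fin (N i'.1) × Fin (M i'.1),
                  (∏ i', (t i'.1 (γ i').1 (γ i').2 j) ^ 2) := by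
                  exact Finset.sum_congr rfl fun γ _ => (Finset.prod_pow _ _ _).symm
              _ = _ := (Fintype.prod_sum
                  (fun (i' : {jj : Fin nn // jj ≠ q}) (pr : Fin (N i'.1) × Fin (M i'.1)) =>
                    (t i'.1 pr.1 pr.2 j) ^ 2)).symm
          rw [hσsq, hsub cI]
          refine Finset.prod_le_prod (fun i' _ => ?_) (fun i' _ => ?_)
          · exact Finset.sum_nonneg fun pr _ => sq_nonneg _
          · calc (∑ pr : Fin (N i'.1) × Fin (M i'.1), (t i'.1 pr.1 pr.2 j) ^ 2)
                = ∑ α, ∑ k, (t i'.1 α k j) ^ 2 := by rw [Fintype.sum_prod_type]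
              _ ≤ cI i'.1 := hC i'.1 j
      _ = (∑ j, b j ^ 2) + ∏ i ∈ Finset.univ.erase q, cI i := by
          rw [← Finset.sum_mul, hp1, one_mul]
  -- conclude
  rw [hQ]
  refine (traceNorm_mul_conjTranspose_le L R).trans ?_
  have hFL0 : (0:ℝ) ≤ (∑ i, a i ^ 2) + cI q :=
    le_trans (Finset.sum_nonneg fun r _ => Finset.sum_nonneg fun j _ => Complex.normSq_nonneg _)
      hFL
  have hfinal : Real.sqrt (∑ r, ∑ j, Complex.normSq (L r j))
      * Real.sqrt (∑ c, ∑ j, Complex.normSq (R c j))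
      ≤ Real.sqrt (((∑ i, a i ^ 2) + cI q)
          * ((∑ j, b j ^ 2) + ∏ i ∈ Finset.univ.erase q, cI i)) := by
    rw [Real.sqrt_mul hFL0]
    exact mul_le_mul (Real.sqrt_le_sqrt hFL) (Real.sqrt_le_sqrt hFR)
      (Real.sqrt_nonneg _) (Real.sqrt_nonneg _)
  refine hfinal.trans (le_of_eq ?_)
  have hprod : (∏ i ∈ Finset.univ.erase q, cI i)
      = ∏ i ∈ Finset.univ.erase q,
          ((d i : ℝ) - 1) / (d i) *
            (((d i : ℝ) ^ 2 + (M i : ℝ) ^ 2 * x i) / ((M i : ℝ) * ((M i : ℝ) - 1))) := by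
    refine Finset.prod_congr rfl fun i _ => ?_
    simp only [hcI]
    rw [div_mul_div_comm, ← mul_assoc]
  rw [hprod]
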